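/- For all real λ, κ₁ with d₁ := 1 − 2κ₁ ≠ 0, and all real d₂, the determinant of the 7×7 matrix with rows (−λ, 0, 1, −1/d₁, 0, 0, 0), (0, 0, 1 − d₁d₂, −1/d₁, 0, 0, 0), (0, −λ, 2κ₁, −1/d₁, 1, 0, 0), (0, 0, 2κ₁ − λ, −1/d₁, 0, 1, 0), (1, 0, 2κ₁, −1/d₁ − λ, 0, 0, 0), (0, 0, 2κ₁, −1/d₁, 0, −λ, 0), (0, 1, 2κ₁, −1/d₁, 0, 0, −λ) is zero, because its second, fifth and seventh columns are linearly dependent (for λ ≠ 0, column 2 = −λ · column 5 − (1/λ) · column 7, and the determinant is a polynomial in λ, hence vanishes identically). -/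

import Mathlib

open Matrix

/-- The 7×7 determinant arising in the cofactor expansion of the
characteristic polynomial of `C·D₂·D₁` (in the proof that the eigenvalues of the
two-step cycle-map matrix `B_P` of the symmetric 10-dimensional ring-circuit Glass
network are independent of `κ₂`) vanishes, its second, fifth and seventh columns being
linearly dependent.  Here `d₁ = 1 − 2κ₁`. -/
theorem stmt15 (lam κ₁ d₂ : ℝ) (h : 1 - 2*κ₁ ≠ 0) :
    (!![-lam, 0,    1,              -(1/(1-2*κ₁)),       0, 0,    0;
        0,    0,    1-(1-2*κ₁)*d₂,  -(1/(1-2*κ₁)),       0, 0,    0;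
        0,    -lam, 2*κ₁,           -(1/(1-2*κ₁)),       1, 0,    0;
        0,    0,    2*κ₁ - lam,     -(1/(1-2*κ₁)),       0, 1,    0;
        1,    0,    2*κ₁,           -(1/(1-2*κ₁)) - lam, 0, 0,    0;
        0,    0,    2*κ₁,           -(1/(1-2*κ₁)),       0, -lam, 0;
        0,    1,    2*κ₁,           -(1/(1-2*κ₁)),       0, 0,    -lam] :
      Matrix (Fin 7) (Fin 7) ℝ).det = 0 := by
  rw [← Matrix.exists_mulVec_eq_zero_iff]
  rcases eq_or_ne lam 0 with hl | hl
  · refine ⟨![0, 0, 0, 0, 0, 0, 1], ?_, ?_⟩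
    · intro hv
      have h1 : (1:ℝ) = 0 := congrFun hv 6
      exact one_ne_zero h1
    · simp only [Matrix.cons_mulVec, Matrix.cons_dotProduct, Matrix.dotProduct_of_isEmpty,
        Matrix.head_cons, Matrix.tail_cons, Matrix.cons_eq_zero_iff]
      norm_num [hl]
      funext i
      exact i.elim0
  · refine ⟨![0, 1, 0, 0, lam, 0, 1/lam], ?_, ?_⟩
    · intro hv
      have h1 : (1:ℝ) = 0 := congrFun hv 1
      exact one_ne_zero h1
    · simp only [Matrix.cons_mulVec, Matrix.cons_dotProduct, Matrix.dotProduct_of_isEmpty,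
        Matrix.head_cons, Matrix.tail_cons, Matrix.cons_eq_zero_iff]
      norm_num
      field_simp
      exact ⟨by norm_num, funext fun i => i.elim0⟩
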